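/- Fix constants 0 < α ≤ β and an (α,β)-PDF-bounded, non-atomic probability distribution D supported on [0,1]. There exists a constant c > 0 (depending only on D) such that the following holds: for n agents and m = m(n) chores with m(n) ≥ c·n·log n, with disutilities drawn independently from D, the allocation that assigns each chore j to the agent argmin_{i} d_i(j) with the smallest disutility for j is envy-free with probability tending to 1 as n → ∞. -/

import Mathlib

open MeasureTheory Filter

/-- Cost (disutility) of agent `i` for the bundle of agent `i'` under allocation `A`. -/
noncomputable def bundleCost {n m : ℕ} (d : Fin n → Fin m → ℝ) (A : Fin m → Fin n)
    (i i' : Fin n) : ℝ :=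
  ∑ j ∈ Finset.univ.filter (fun j => A j = i'), d i j

/-- An allocation is envy-free if every agent weakly prefers her own bundle
to the bundle of any other agent. -/
noncomputable def IsEnvyFree {n m : ℕ} (d : Fin n → Fin m → ℝ) (A : Fin m → Fin n) : Prop :=
  ∀ i i' : Fin n, bundleCost d A i i ≤ bundleCost d A i i'

/-- An allocation is cost-minimizing if each chore is assigned to an agent with the
smallest disutility for it. -/
def IsCostMinimizing {n m : ℕ} (d : Fin n → Fin m → ℝ) (A : Fin m → Fin n) : Prop :=
  ∀ j : Fin m, ∀ i : Fin n, d (A j) j ≤ d i j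

/-- `D` is a non-atomic distribution on `[0,1]` with a probability density function
bounded between `α` and `β` on `[0,1]` (and vanishing outside `[0,1]`). -/
def PDFBounded01 (D : Measure ℝ) (α β : ℝ) : Prop :=
  (∀ x : ℝ, D {x} = 0) ∧
  ∃ f : ℝ → ℝ,
    (∀ x ∈ Set.Icc (0 : ℝ) 1, α ≤ f x ∧ f x ≤ β) ∧
    (∀ x, x ∉ Set.Icc (0 : ℝ) 1 → f x = 0) ∧
    D = MeasureTheory.volume.withDensity (fun x => ENNReal.ofReal (f x))

open scoped ENNReal NNReal
open Set

lemma prod_if_single {M : Type*} [CommMonoid M] {n : ℕ} (i : Fin n) (a b : M) :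
    ∏ k : Fin n, (if k = i then a else b) = a * b^(n-1) := by
  rw [← Finset.mul_prod_erase Finset.univ _ (Finset.mem_univ i), if_pos rfl]
  congr 1
  rw [Finset.prod_congr rfl (fun k hk => if_neg (Finset.mem_erase.mp hk).1),
    Finset.prod_const, Finset.card_erase_of_mem (Finset.mem_univ i), Finset.card_univ,
    Fintype.card_fin]

lemma prod_if_pair {M : Type*} [CommMonoid M] {n : ℕ} {i i' : Fin n} (h : i ≠ i') (a b c : M) :
    ∏ k : Fin n, (if k = i' then a else if k = i then b else c) = a * (b * c^(n-2)) := by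
  rw [← Finset.mul_prod_erase Finset.univ _ (Finset.mem_univ i'), if_pos rfl]
  congr 1
  have hi : i ∈ Finset.univ.erase i' := Finset.mem_erase.mpr ⟨h, Finset.mem_univ i⟩
  rw [← Finset.mul_prod_erase _ _ hi, if_neg h, if_pos rfl]
  congr 1
  rw [Finset.prod_congr rfl (fun k hk => ?_), Finset.prod_const,
    Finset.card_erase_of_mem hi, Finset.card_erase_of_mem (Finset.mem_univ i'),
    Finset.card_univ, Fintype.card_fin]
  · rfl
  · have hk1 := (Finset.mem_erase.mp hk).1
    have hk2 := (Finset.mem_erase.mp (Finset.mem_erase.mp hk).2).1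
    rw [if_neg hk2, if_neg hk1]

lemma exp_neg_one_le : Real.exp (-1) ≤ 3/8 := by
  rw [Real.exp_neg]
  have h := Real.exp_one_gt_d9
  rw [inv_le_comm₀ (by positivity) (by norm_num)]
  linarith

lemma aux_l1 (l : ℕ) : ((l:ℝ)+1) * Real.exp (-(l:ℝ)) ≤ 2*(3/4)^l := by
  have h2l : ((l:ℝ)+1) ≤ 2*2^l := by
    induction l with
    | zero => norm_num
    | succ l IH =>
        push_cast
        push_cast at IH
        have h1 : (1:ℝ) ≤ 2^l := one_le_pow₀ (by norm_num)
        rw [pow_succ]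
        nlinarith
  have hexp : Real.exp (-(l:ℝ)) = Real.exp (-1) ^ l := by
    rw [show -(l:ℝ) = l * (-1) by ring, Real.exp_nat_mul]
  rw [hexp]
  have hbase : (2:ℝ) * Real.exp (-1) ≤ 3/4 := by
    have := exp_neg_one_le; linarith
  calc ((l:ℝ)+1) * Real.exp (-1) ^ l ≤ 2*2^l * Real.exp (-1) ^ l := by
        exact mul_le_mul_of_nonneg_right h2l (pow_nonneg (Real.exp_nonneg _) l)
    _ = 2 * (2 * Real.exp (-1))^l := by rw [mul_pow]; ring
    _ ≤ 2 * (3/4)^l := by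
        have := pow_le_pow_left₀ (by positivity : (0:ℝ) ≤ 2 * Real.exp (-1)) hbase l
        linarith
  
lemma aux_geom (R : ℕ) : ∑ l ∈ Finset.range R, ((3:ℝ)/4)^l ≤ 4 := by
  rw [geom_sum_eq (by norm_num : (3:ℝ)/4 ≠ 1)]
  have h : (0:ℝ) ≤ (3/4:ℝ)^R := by positivity
  have h2 : ((3:ℝ)/4)^R ≤ 1 := pow_le_one₀ (by norm_num) (by norm_num)
  rw [div_le_iff_of_neg (by norm_num : (3:ℝ)/4 - 1 < 0)]
  linarith

lemma exp_le_one_add_two_mul {z : ℝ} (h0 : 0 ≤ z) (h1 : z ≤ 1) :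
    Real.exp z ≤ 1 + 2*z := by
  have := Real.exp_bound' h0 h1 (n := 1) one_pos
  simp [Nat.factorial] at this
  linarith

lemma measurePreserving_piCongrRight' {ι : Type*} [Fintype ι] {X Y : ι → Type*}
    [∀ i, MeasurableSpace (X i)] [∀ i, MeasurableSpace (Y i)]
    (e : ∀ i, X i ≃ᵐ Y i) (μ : ∀ i, Measure (X i)) (ν : ∀ i, Measure (Y i))
    [∀ i, SigmaFinite (μ i)] [∀ i, SigmaFinite (ν i)]
    (he : ∀ i, MeasurePreserving (e i) (μ i) (ν i)) :
    MeasurePreserving (MeasurableEquiv.piCongrRight e) (Measure.pi μ) (Measure.pi ν) := by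
  refine ⟨(MeasurableEquiv.piCongrRight e).measurable, ?_⟩
  refine ((Measure.pi_eq (μ := ν) fun s hs => ?_)).symm
  rw [Measure.map_apply (MeasurableEquiv.piCongrRight e).measurable
    (MeasurableSet.univ_pi hs)]
  have hpre : (MeasurableEquiv.piCongrRight e) ⁻¹' (Set.pi Set.univ s)
      = Set.pi Set.univ (fun i => e i ⁻¹' s i) := by
    ext x
    simp [MeasurableEquiv.piCongrRight, Equiv.piCongrRight]
  rw [hpre, Measure.pi_pi]
  refine Finset.prod_congr rfl fun i _ => ?_
  rw [← (he i).map_eq, Measure.map_apply (e i).measurable (hs i)]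

lemma lintegral_prod_columns {D : Measure ℝ} [IsProbabilityMeasure D] (n : ℕ) :
    ∀ (mm : ℕ) (h : Fin mm → (Fin n → ℝ) → ℝ≥0∞), (∀ j, Measurable (h j)) →
    ∫⁻ d, ∏ j, h j (fun i => d i j) ∂(Measure.pi fun _ : Fin n => Measure.pi fun _ : Fin mm => D)
      = ∏ j, ∫⁻ x, h j x ∂(Measure.pi fun _ : Fin n => D) := by
  intro mm
  induction mm with
  | zero =>
      intro h _
      simp
  | succ mm IH =>
      intro h hmeas
      set P : Measure (Fin n → ℝ) := Measure.pi fun _ : Fin n => D with hP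
      have hcol : ∀ (j : Fin mm), Measurable
          (fun d' : Fin n → Fin mm → ℝ => fun i => d' i j) := fun j =>
        measurable_pi_lambda _ fun i => (measurable_pi_apply j).comp (measurable_pi_apply i)
      have e1 : MeasurePreserving
          (MeasurableEquiv.piFinSuccAbove (fun _ : Fin (mm+1) => ℝ) 0)
          (Measure.pi fun _ : Fin (mm+1) => D)
          (D.prod (Measure.pi fun _ : Fin mm => D)) :=
        measurePreserving_piFinSuccAbove (fun _ : Fin (mm+1) => D) 0
      have hΦ1 : MeasurePreserving
          (MeasurableEquiv.piCongrRight fun _ : Fin n =>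
            MeasurableEquiv.piFinSuccAbove (fun _ : Fin (mm+1) => ℝ) 0)
          (Measure.pi fun _ : Fin n => Measure.pi fun _ : Fin (mm+1) => D)
          (Measure.pi fun _ : Fin n => D.prod (Measure.pi fun _ : Fin mm => D)) :=
        measurePreserving_piCongrRight' _ _ _ (fun _ => e1)
      have hΦ2 : MeasurePreserving
          (MeasurableEquiv.arrowProdEquivProdArrow ℝ (Fin mm → ℝ) (Fin n))
          (Measure.pi fun _ : Fin n => D.prod (Measure.pi fun _ : Fin mm => D))
          (P.prod (Measure.pi fun _ : Fin n => Measure.pi fun _ : Fin mm => D)) :=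
        measurePreserving_arrowProdEquivProdArrow ℝ (Fin mm → ℝ) (Fin n)
          (fun _ => D) (fun _ => Measure.pi fun _ : Fin mm => D)
      have hΦ := hΦ2.comp hΦ1
      have hg : Measurable (fun d' : Fin n → Fin mm → ℝ =>
          ∏ j, h j.succ (fun i => d' i j)) :=
        Finset.measurable_prod _ fun j _ => (hmeas j.succ).comp (hcol j)
      have hG : Measurable (fun p : (Fin n → ℝ) × (Fin n → Fin mm → ℝ) =>
          h 0 p.1 * ∏ j, h j.succ (fun i => p.2 i j)) :=
        ((hmeas 0).comp measurable_fst).mul (hg.comp measurable_snd)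
      have key : ∫⁻ d, ∏ j, h j (fun i => d i j)
            ∂(Measure.pi fun _ : Fin n => Measure.pi fun _ : Fin (mm+1) => D)
          = ∫⁻ p, h 0 p.1 * ∏ j, h j.succ (fun i => p.2 i j)
            ∂(P.prod (Measure.pi fun _ : Fin n => Measure.pi fun _ : Fin mm => D)) := by
        rw [← hΦ.lintegral_comp hG]
        refine lintegral_congr fun d => ?_
        rw [Fin.prod_univ_succ]
        rfl
      rw [key, lintegral_prod_mul ((hmeas 0).aemeasurable) hg.aemeasurable,
        IH _ (fun j => hmeas j.succ), Fin.prod_univ_succ]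

section DBounds

set_option linter.unusedSectionVars false

variable {D : Measure ℝ} {α β : ℝ} {f : ℝ → ℝ}
  (ha : 0 ≤ α) (hb : 0 ≤ β)
  (hαβ : ∀ x ∈ Set.Icc (0:ℝ) 1, α ≤ f x ∧ f x ≤ β)
  (hf0 : ∀ x, x ∉ Set.Icc (0:ℝ) 1 → f x = 0)
  (hDf : D = MeasureTheory.volume.withDensity (fun x => ENNReal.ofReal (f x)))

include hαβ hf0 hDf

lemma D_le_beta_mul {S : Set ℝ} (hS : MeasurableSet S) :
    D S ≤ ENNReal.ofReal β * volume (S ∩ Set.Icc 0 1) := by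
  rw [hDf, withDensity_apply _ hS]
  calc ∫⁻ x in S, ENNReal.ofReal (f x) ∂volume
      ≤ ∫⁻ x in S, (Set.Icc (0:ℝ) 1).indicator (fun _ => ENNReal.ofReal β) x ∂volume := by
        refine lintegral_mono fun x => ?_
        by_cases hx : x ∈ Set.Icc (0:ℝ) 1
        · simp [Set.indicator_of_mem hx, ENNReal.ofReal_le_ofReal (hαβ x hx).2]
        · simp [hf0 x hx, Set.indicator_of_notMem hx]
    _ = ENNReal.ofReal β * volume (S ∩ Set.Icc 0 1) := by
        rw [lintegral_indicator measurableSet_Icc]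
        simp [Measure.restrict_restrict measurableSet_Icc, Set.inter_comm, mul_comm]

lemma D_ge_alpha_mul {S : Set ℝ} (hS : MeasurableSet S) (hsub : S ⊆ Set.Icc 0 1) :
    ENNReal.ofReal α * volume S ≤ D S := by
  rw [hDf, withDensity_apply _ hS]
  calc ENNReal.ofReal α * volume S = ∫⁻ _ in S, ENNReal.ofReal α ∂volume := by
        simp [mul_comm]
    _ ≤ ∫⁻ x in S, ENNReal.ofReal (f x) ∂volume := by
        refine lintegral_mono_ae ?_
        filter_upwards [ae_restrict_mem hS] with x hx
        exact ENNReal.ofReal_le_ofReal (hαβ x (hsub hx)).1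

include hb in
lemma D_Iio_le {t : ℝ} (ht : 0 ≤ t) : D (Set.Iio t) ≤ ENNReal.ofReal (β * t) := by
  refine (D_le_beta_mul hαβ hf0 hDf measurableSet_Iio).trans ?_
  have h1 : Set.Iio t ∩ Set.Icc (0:ℝ) 1 ⊆ Set.Ico 0 t := fun x hx => ⟨hx.2.1, hx.1⟩
  calc ENNReal.ofReal β * volume (Set.Iio t ∩ Set.Icc 0 1)
      ≤ ENNReal.ofReal β * volume (Set.Ico 0 t) := by
        exact mul_le_mul_right (measure_mono h1) _
    _ ≤ ENNReal.ofReal (β * t) := by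
        rw [Real.volume_Ico, ENNReal.ofReal_mul hb]
        simp [ht]
    
include ha in
lemma D_Iio_ge {t : ℝ} (ht : 0 ≤ t) (ht1 : t ≤ 1) :
    ENNReal.ofReal (α * t) ≤ D (Set.Iio t) := by
  have h := D_ge_alpha_mul hαβ hf0 hDf (measurableSet_Ico (a := (0:ℝ)) (b := t))
    (fun x hx => ⟨hx.1, le_trans (le_of_lt hx.2) ht1⟩)
  refine le_trans ?_ (le_trans h (measure_mono Set.Ico_subset_Iio_self))
  rw [Real.volume_Ico, ENNReal.ofReal_mul ha]
  simp [ht]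

lemma D_Ico_le {a b : ℝ} (hab : a ≤ b) (hb2 : 0 ≤ β) :
    D (Set.Ico a b) ≤ ENNReal.ofReal (β * (b - a)) := by
  refine (D_le_beta_mul hαβ hf0 hDf measurableSet_Ico).trans ?_
  calc ENNReal.ofReal β * volume (Set.Ico a b ∩ Set.Icc 0 1)
      ≤ ENNReal.ofReal β * volume (Set.Ico a b) := mul_le_mul_right (measure_mono
        Set.inter_subset_left) _
    _ ≤ ENNReal.ofReal (β * (b - a)) := by
        rw [Real.volume_Ico, ENNReal.ofReal_mul hb2]

variable [IsProbabilityMeasure D]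

include hb in
lemma D_Ici_ge {t : ℝ} (ht : 0 ≤ t) :
    1 - ENNReal.ofReal (β * t) ≤ D (Set.Ici t) := by
  have hc : D (Set.Ici t) = 1 - D (Set.Iio t) := by
    rw [← Set.compl_Iio, measure_compl measurableSet_Iio (measure_ne_top D _), measure_univ]
  rw [hc]
  exact tsub_le_tsub_left (D_Iio_le hb hαβ hf0 hDf ht) _

include ha in
lemma D_Ici_le_exp {t : ℝ} (ht : 0 ≤ t) :
    D (Set.Ici t) ≤ ENNReal.ofReal (Real.exp (-(α * t))) := by
  rcases le_or_gt t 1 with ht1 | ht1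
  · have hc : D (Set.Ici t) = 1 - D (Set.Iio t) := by
      rw [← Set.compl_Iio, measure_compl measurableSet_Iio (measure_ne_top D _), measure_univ]
    rw [hc]
    have h1 : D (Set.Iio t) ≥ ENNReal.ofReal (α * t) := D_Iio_ge ha hαβ hf0 hDf ht ht1
    have h2 : (1:ℝ≥0∞) - D (Set.Iio t) ≤ 1 - ENNReal.ofReal (α * t) := tsub_le_tsub_left h1 _
    refine h2.trans ?_
    have h3 : (1:ℝ≥0∞) ≤ ENNReal.ofReal (1 - α * t) + ENNReal.ofReal (α * t) := by
      calc (1:ℝ≥0∞) = ENNReal.ofReal ((1 - α * t) + α * t) := by norm_num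
        _ ≤ _ := ENNReal.ofReal_add_le
    refine (tsub_le_iff_right.mpr h3).trans ?_
    refine ENNReal.ofReal_le_ofReal ?_
    have := Real.add_one_le_exp (-(α * t))
    linarith
  · have h0 : Set.Ici t ∩ Set.Icc (0:ℝ) 1 = ∅ := by
      ext x; simp only [Set.mem_inter_iff, Set.mem_Ici, Set.mem_Icc, Set.mem_empty_iff_false,
        iff_false, not_and]
      intro h1 h2
      linarith
    refine le_trans (D_le_beta_mul hαβ hf0 hDf measurableSet_Ici) ?_
    rw [h0]
    simp [Real.exp_pos]

end DBounds

/-- clamp to [0,1] -/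
noncomputable def clamp01 (x : ℝ) : ℝ := min (max x 0) 1

lemma clamp01_nonneg (x : ℝ) : 0 ≤ clamp01 x := le_min (le_max_right _ _) zero_le_one

lemma clamp01_le_one (x : ℝ) : clamp01 x ≤ 1 := min_le_right _ _

lemma clamp01_of_mem {x : ℝ} (h0 : 0 ≤ x) (h1 : x ≤ 1) : clamp01 x = x := by
  unfold clamp01; rw [max_eq_left h0, min_eq_left h1]

lemma clamp01_le_of_nonneg {x : ℝ} (h0 : 0 ≤ x) : clamp01 x ≤ x :=
  le_trans (min_le_left _ _) (le_of_eq (max_eq_left h0))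

lemma measurable_clamp01 : Measurable clamp01 :=
  (measurable_id.max measurable_const).min measurable_const

/-- indicator-type function used for the own-bundle bound -/
noncomputable def ZcF (n : ℕ) (i : Fin n) : (Fin n → ℝ) → ℝ :=
  Set.indicator {y : Fin n → ℝ | ∀ k, y i ≤ y k} (fun y => clamp01 (y i))

lemma ZcF_nonneg (n : ℕ) (i : Fin n) (x : Fin n → ℝ) : 0 ≤ ZcF n i x := by
  unfold ZcF
  by_cases h : x ∈ {y : Fin n → ℝ | ∀ k, y i ≤ y k}
  · rw [Set.indicator_of_mem h]; exact clamp01_nonneg _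
  · rw [Set.indicator_of_notMem h]

lemma ZcF_le_one (n : ℕ) (i : Fin n) (x : Fin n → ℝ) : ZcF n i x ≤ 1 := by
  unfold ZcF
  by_cases h : x ∈ {y : Fin n → ℝ | ∀ k, y i ≤ y k}
  · rw [Set.indicator_of_mem h]; exact clamp01_le_one _
  · rw [Set.indicator_of_notMem h]; exact zero_le_one

lemma minSet_measurable (n : ℕ) (i : Fin n) :
    MeasurableSet {y : Fin n → ℝ | ∀ k, y i ≤ y k} := by
  have : {y : Fin n → ℝ | ∀ k, y i ≤ y k} = ⋂ k, {y : Fin n → ℝ | y i ≤ y k} := by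
    ext y; simp
  rw [this]
  exact MeasurableSet.iInter fun k =>
    measurableSet_le (measurable_pi_apply i) (measurable_pi_apply k)

lemma ZcF_measurable (n : ℕ) (i : Fin n) : Measurable (ZcF n i) :=
  (measurable_clamp01.comp (measurable_pi_apply i)).indicator (minSet_measurable n i)

/-- the "cross" box -/
def CBox (n : ℕ) (i i' : Fin n) (st : ℝ) : Set (Fin n → ℝ) :=
  Set.univ.pi fun k =>
    if k = i' then Set.Iio st else if k = i then Set.Icc (1/2) 1 else Set.Ici st

lemma CBox_measurable (n : ℕ) (i i' : Fin n) (st : ℝ) : MeasurableSet (CBox n i i' st) := by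
  refine MeasurableSet.univ_pi fun k => ?_
  split_ifs
  · exact measurableSet_Iio
  · exact measurableSet_Icc
  · exact measurableSet_Ici

noncomputable def YcF (n : ℕ) (i i' : Fin n) (st : ℝ) : (Fin n → ℝ) → ℝ :=
  Set.indicator (CBox n i i' st) (fun _ => 1)

lemma YcF_measurable (n : ℕ) (i i' : Fin n) (st : ℝ) : Measurable (YcF n i i' st) :=
  measurable_const.indicator (CBox_measurable n i i' st)

lemma YcF_nonneg (n : ℕ) (i i' : Fin n) (st : ℝ) (x : Fin n → ℝ) : 0 ≤ YcF n i i' st x := by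
  unfold YcF
  by_cases h : x ∈ CBox n i i' st
  · rw [Set.indicator_of_mem h]; exact zero_le_one
  · rw [Set.indicator_of_notMem h]

/-- own-bundle domination -/
lemma own_le {n m : ℕ} (d : Fin n → Fin m → ℝ) (hd : ∀ i j, d i j ∈ Set.Icc (0:ℝ) 1)
    (A : Fin m → Fin n) (hA : IsCostMinimizing d A) (i : Fin n) :
    bundleCost d A i i ≤ ∑ j, ZcF n i (fun k => d k j) := by
  unfold bundleCost
  have h1 : ∀ j ∈ Finset.univ.filter (fun j => A j = i),
      d i j ≤ ZcF n i (fun k => d k j) := by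
    intro j hj
    rw [Finset.mem_filter] at hj
    have hmin : ∀ k, d i j ≤ d k j := fun k => hj.2 ▸ hA j k
    have hmem : (fun k => d k j) ∈ {y : Fin n → ℝ | ∀ k, y i ≤ y k} := hmin
    rw [ZcF, Set.indicator_of_mem hmem, clamp01_of_mem (hd i j).1 (hd i j).2]
  calc ∑ j ∈ Finset.univ.filter (fun j => A j = i), d i j
      ≤ ∑ j ∈ Finset.univ.filter (fun j => A j = i), ZcF n i (fun k => d k j) :=
        Finset.sum_le_sum h1
    _ ≤ ∑ j, ZcF n i (fun k => d k j) :=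
        Finset.sum_le_sum_of_subset_of_nonneg (Finset.filter_subset _ _)
          (fun j _ _ => ZcF_nonneg n i _)

/-- cross-bundle domination -/
lemma cross_ge {n m : ℕ} (d : Fin n → Fin m → ℝ) (hd : ∀ i j, d i j ∈ Set.Icc (0:ℝ) 1)
    (A : Fin m → Fin n) (hA : IsCostMinimizing d A) (i i' : Fin n) (hne : i ≠ i')
    (st : ℝ) (hst : st ≤ 1/2) :
    (1/2) * ∑ j, YcF n i i' st (fun k => d k j) ≤ bundleCost d A i i' := by
  classical
  unfold bundleCost
  set G : Finset (Fin m) := Finset.univ.filter (fun j => (fun k => d k j) ∈ CBox n i i' st)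
    with hG
  have hsum : ∑ j, YcF n i i' st (fun k => d k j) = G.card := by
    rw [hG, Finset.card_filter]
    push_cast
    refine Finset.sum_congr rfl fun j _ => ?_
    by_cases h : (fun k => d k j) ∈ CBox n i i' st
    · rw [YcF, Set.indicator_of_mem h, if_pos h]
    · rw [YcF, Set.indicator_of_notMem h, if_neg h]
  have hbox : ∀ j ∈ G, A j = i' ∧ (1:ℝ)/2 ≤ d i j := by
    intro j hj
    rw [hG, Finset.mem_filter] at hj
    have hj2 := hj.2
    rw [CBox, Set.mem_pi] at hj2
    have hi' : d i' j < st := by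
      have := hj2 i' (Set.mem_univ _)
      simpa using this
    have hi : (1:ℝ)/2 ≤ d i j ∧ d i j ≤ 1 := by
      have := hj2 i (Set.mem_univ _)
      rw [if_neg hne, if_pos rfl] at this
      exact this
    have hstrict : ∀ k, k ≠ i' → d i' j < d k j := by
      intro k hk
      by_cases hki : k = i
      · subst hki
        calc d i' j < st := hi'
          _ ≤ 1/2 := hst
          _ ≤ d k j := hi.1
      · have := hj2 k (Set.mem_univ _)
        rw [if_neg hk, if_neg hki] at this
        calc d i' j < st := hi'
          _ ≤ d k j := this
    constructor
    · by_contra hAj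
      exact absurd (hA j i') (not_le.mpr (hstrict (A j) hAj))
    · exact hi.1
  have hGsub : G ⊆ Finset.univ.filter (fun j => A j = i') := by
    intro j hj
    rw [Finset.mem_filter]
    exact ⟨Finset.mem_univ _, (hbox j hj).1⟩
  calc (1/2) * ∑ j, YcF n i i' st (fun k => d k j) = (1/2 : ℝ) * G.card := by rw [hsum]
    _ = ∑ _j ∈ G, (1/2 : ℝ) := by rw [Finset.sum_const, nsmul_eq_mul, mul_comm]
    _ ≤ ∑ j ∈ G, d i j := Finset.sum_le_sum fun j hj => (hbox j hj).2
    _ ≤ ∑ j ∈ Finset.univ.filter (fun j => A j = i'), d i j :=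
        Finset.sum_le_sum_of_subset_of_nonneg hGsub (fun j _ _ => (hd i j).1)

section Integrals

set_option linter.unusedSectionVars false

variable {D : Measure ℝ} {α β : ℝ} {f : ℝ → ℝ}
  (hα : 0 < α) (hβ1 : 1 ≤ β) (hab : α ≤ β)
  (hαβ : ∀ x ∈ Set.Icc (0:ℝ) 1, α ≤ f x ∧ f x ≤ β)
  (hf0 : ∀ x, x ∉ Set.Icc (0:ℝ) 1 → f x = 0)
  (hDf : D = MeasureTheory.volume.withDensity (fun x => ENNReal.ofReal (f x)))
  [IsProbabilityMeasure D]

include hα hβ1 hab hαβ hf0 hDf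

/-- first moment bound for the own-bundle per-column variable -/
lemma ownZ_lintegral_le {n : ℕ} (hn : 3 ≤ n) (i : Fin n) :
    ∫⁻ x, ENNReal.ofReal (ZcF n i x) ∂(Measure.pi fun _ : Fin n => D)
      ≤ ENNReal.ofReal (8*β*(1/(α*((n:ℝ)-1)))^2) := by
  have ha' : (0:ℝ) ≤ α := le_of_lt hα
  have hb' : (0:ℝ) ≤ β := le_trans (by linarith) hβ1
  set P : Measure (Fin n → ℝ) := Measure.pi fun _ : Fin n => D with hP
  have hν : (2:ℝ) ≤ (n:ℝ) - 1 := by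
    have : (3:ℝ) ≤ (n:ℝ) := by exact_mod_cast hn
    linarith
  have hνpos : (0:ℝ) < (n:ℝ) - 1 := by linarith
  set s : ℝ := 1/(α*((n:ℝ)-1)) with hs
  have hspos : 0 < s := by rw [hs]; positivity
  set R : ℕ := ⌈α*((n:ℝ)-1)⌉₊ + 1 with hR
  have hRs : 1 ≤ (R:ℝ) * s := by
    rw [hR, hs]
    push_cast
    have h1 : α*((n:ℝ)-1) ≤ (⌈α*((n:ℝ)-1)⌉₊ : ℝ) := Nat.le_ceil _
    have h2 : (0:ℝ) < α*((n:ℝ)-1) := by positivity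
    rw [mul_one_div, le_div_iff₀ h2]
    linarith
  -- boxes
  set OBox : ℕ → Set (Fin n → ℝ) := fun l => Set.univ.pi fun k =>
    if k = i then Set.Ico ((l:ℝ)*s) (((l:ℝ)+1)*s) else Set.Ici ((l:ℝ)*s) with hOBox
  set TBox : Set (Fin n → ℝ) := Set.univ.pi fun _ => Set.Ici ((R:ℝ)*s) with hTBox
  have hOBoxm : ∀ l, MeasurableSet (OBox l) := by
    intro l
    refine MeasurableSet.univ_pi fun k => ?_
    split_ifs
    · exact measurableSet_Ico
    · exact measurableSet_Ici
  have hTBoxm : MeasurableSet TBox := MeasurableSet.univ_pi fun _ => measurableSet_Ici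
  -- pointwise domination
  have hpt : ∀ x, ENNReal.ofReal (ZcF n i x) ≤
      (∑ l ∈ Finset.range R, ENNReal.ofReal (((l:ℝ)+1)*s) *
        (OBox l).indicator (fun _ => (1:ℝ≥0∞)) x) +
      TBox.indicator (fun _ => (1:ℝ≥0∞)) x := by
    intro x
    by_cases hc : x ∈ {y : Fin n → ℝ | ∀ k, y i ≤ y k}
    · rcases lt_or_ge (x i) 0 with hneg | hpos
      · have : ZcF n i x = 0 := by
          rw [ZcF, Set.indicator_of_mem hc, clamp01]
          rw [max_eq_right (le_of_lt hneg), min_eq_left zero_le_one]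
        simp [this]
      rcases le_or_gt ((R:ℝ)*s) (x i) with htop | hmid
      · have hmem : x ∈ TBox := by
          rw [hTBox, Set.mem_pi]
          intro k _
          exact le_trans htop (hc k)
        have h1 : ENNReal.ofReal (ZcF n i x) ≤ 1 := by
          rw [ZcF, Set.indicator_of_mem hc]
          calc ENNReal.ofReal (clamp01 (x i)) ≤ ENNReal.ofReal 1 :=
            ENNReal.ofReal_le_ofReal (clamp01_le_one _)
          _ = 1 := by simp
        calc ENNReal.ofReal (ZcF n i x) ≤ 1 := h1
          _ = TBox.indicator (fun _ => (1:ℝ≥0∞)) x := by rw [Set.indicator_of_mem hmem]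
          _ ≤ _ := le_add_self
      · -- middle case
        set l₀ : ℕ := ⌊x i / s⌋₊ with hl₀
        have hl₀R : l₀ < R := by
          have h1 : x i / s < R := by rw [div_lt_iff₀ hspos]; linarith [hmid]
          have h2 : (l₀:ℝ) ≤ x i / s := Nat.floor_le (by positivity)
          exact_mod_cast lt_of_le_of_lt (Nat.cast_le.mpr (le_refl l₀)) (lt_of_le_of_lt h2 h1)
        have hfl : (l₀:ℝ)*s ≤ x i := by
          rw [← le_div_iff₀ hspos]
          exact Nat.floor_le (by positivity)
        have hfu : x i < ((l₀:ℝ)+1)*s := by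
          rw [← div_lt_iff₀ hspos]
          exact Nat.lt_floor_add_one _
        have hmem : x ∈ OBox l₀ := by
          rw [hOBox, Set.mem_pi]
          intro k _
          by_cases hk : k = i
          · subst hk; rw [if_pos rfl]; exact ⟨hfl, hfu⟩
          · rw [if_neg hk]; exact le_trans hfl (hc k)
        have hterm : ENNReal.ofReal (ZcF n i x) ≤
            ENNReal.ofReal (((l₀:ℝ)+1)*s) * (OBox l₀).indicator (fun _ => (1:ℝ≥0∞)) x := by
          rw [Set.indicator_of_mem hmem, mul_one, ZcF, Set.indicator_of_mem hc]
          exact ENNReal.ofReal_le_ofReal (le_trans (clamp01_le_of_nonneg hpos) (le_of_lt hfu))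
        refine le_trans hterm (le_trans ?_ le_self_add)
        exact Finset.single_le_sum (f := fun l : ℕ => ENNReal.ofReal (((l:ℝ)+1)*s) *
          (OBox l).indicator (fun _ => (1:ℝ≥0∞)) x) (fun _ _ => zero_le)
          (Finset.mem_range.mpr hl₀R)
    · rw [ZcF, Set.indicator_of_notMem hc]
      simp
  -- integrate
  have hint : ∫⁻ x, ENNReal.ofReal (ZcF n i x) ∂P ≤
      (∑ l ∈ Finset.range R, ENNReal.ofReal (((l:ℝ)+1)*s) * P (OBox l)) + P TBox := by
    refine le_trans (lintegral_mono hpt) ?_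
    rw [lintegral_add_right _ ((measurable_const.indicator hTBoxm))]
    rw [lintegral_finset_sum _ (fun l _ => (measurable_const.indicator (hOBoxm l)).const_mul _)]
    refine add_le_add (le_of_eq (Finset.sum_congr rfl fun l _ => ?_)) (le_of_eq ?_)
    · rw [lintegral_const_mul _ (measurable_const.indicator (hOBoxm l)),
        lintegral_indicator_const (hOBoxm l), one_mul]
    · rw [lintegral_indicator_const hTBoxm, one_mul]
  -- TBox has measure zero
  have hTzero : P TBox = 0 := by
    rw [hTBox, hP, Measure.pi_pi]
    have hD0 : D (Set.Ici ((R:ℝ)*s)) = 0 := by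
      refine le_antisymm ?_ (zero_le)
      refine le_trans (D_le_beta_mul hαβ hf0 hDf measurableSet_Ici) ?_
      have hsub : Set.Ici ((R:ℝ)*s) ∩ Set.Icc 0 1 ⊆ Set.Icc ((R:ℝ)*s) 1 :=
        fun y hy => ⟨hy.1, hy.2.2⟩
      calc ENNReal.ofReal β * volume (Set.Ici ((R:ℝ)*s) ∩ Set.Icc 0 1)
          ≤ ENNReal.ofReal β * volume (Set.Icc ((R:ℝ)*s) 1) :=
            mul_le_mul_right (measure_mono hsub) _
        _ = 0 := by
            rw [Real.volume_Icc]
            have hz : ENNReal.ofReal (1 - (R:ℝ)*s) = 0 := ENNReal.ofReal_eq_zero.mpr (by linarith)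
            rw [hz, mul_zero]
    rw [Finset.prod_const, hD0, zero_pow (by simp; omega)]
  -- box measures
  have hbox : ∀ l : ℕ, P (OBox l) ≤ ENNReal.ofReal (β*s*Real.exp (-(l:ℝ))) := by
    intro l
    rw [hOBox, hP, Measure.pi_pi]
    have hls : (0:ℝ) ≤ (l:ℝ)*s := by positivity
    simp only [apply_ite D]
    rw [prod_if_single]
    have h1 : D (Set.Ico ((l:ℝ)*s) (((l:ℝ)+1)*s)) ≤ ENNReal.ofReal (β*s) := by
      refine le_trans (D_Ico_le hαβ hf0 hDf (by nlinarith) hb') ?_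
      refine ENNReal.ofReal_le_ofReal (le_of_eq ?_)
      ring
    have h2 : D (Set.Ici ((l:ℝ)*s))^(n-1) ≤ ENNReal.ofReal (Real.exp (-(l:ℝ))) := by
      have h3 : D (Set.Ici ((l:ℝ)*s)) ≤ ENNReal.ofReal (Real.exp (-(α*((l:ℝ)*s)))) :=
        D_Ici_le_exp ha' hαβ hf0 hDf hls
      calc D (Set.Ici ((l:ℝ)*s))^(n-1)
          ≤ ENNReal.ofReal (Real.exp (-(α*((l:ℝ)*s))))^(n-1) := by gcongr
        _ = ENNReal.ofReal (Real.exp (-(α*((l:ℝ)*s)))^(n-1)) := by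
            rw [ENNReal.ofReal_pow (Real.exp_nonneg _)]
        _ = ENNReal.ofReal (Real.exp (((n:ℝ)-1) * (-(α*((l:ℝ)*s))))) := by
            rw [← Real.exp_nat_mul]
            congr 2
            rw [Nat.cast_sub (by omega)]
            norm_num
        _ = ENNReal.ofReal (Real.exp (-(l:ℝ))) := by
            congr 1
            have : ((n:ℝ)-1) * (-(α*((l:ℝ)*s))) = -(l:ℝ) := by
              rw [hs]
              field_simp
            rw [this]
    calc D (Set.Ico ((l:ℝ)*s) (((l:ℝ)+1)*s)) * D (Set.Ici ((l:ℝ)*s))^(n-1)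
        ≤ ENNReal.ofReal (β*s) * ENNReal.ofReal (Real.exp (-(l:ℝ))) := by
          exact mul_le_mul' h1 h2
      _ = ENNReal.ofReal (β*s*Real.exp (-(l:ℝ))) := by
          rw [← ENNReal.ofReal_mul (by positivity)]
  -- sum the series
  have hsum : ∑ l ∈ Finset.range R, ENNReal.ofReal (((l:ℝ)+1)*s) * P (OBox l)
      ≤ ENNReal.ofReal (8*β*s^2) := by
    calc ∑ l ∈ Finset.range R, ENNReal.ofReal (((l:ℝ)+1)*s) * P (OBox l)
        ≤ ∑ l ∈ Finset.range R, ENNReal.ofReal (β*s^2*(2*(3/4)^l)) := by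
          refine Finset.sum_le_sum fun l _ => ?_
          refine le_trans (mul_le_mul' (le_refl _) (hbox l)) ?_
          rw [← ENNReal.ofReal_mul (by positivity)]
          refine ENNReal.ofReal_le_ofReal ?_
          have h5 := aux_l1 l
          have hβs : 0 ≤ β*s^2 := by positivity
          calc ((l:ℝ)+1)*s*(β*s*Real.exp (-(l:ℝ)))
              = β*s^2*(((l:ℝ)+1)*Real.exp (-(l:ℝ))) := by ring
            _ ≤ β*s^2*(2*(3/4)^l) := by nlinarith [mul_le_mul_of_nonneg_left h5 hβs]
      _ = ENNReal.ofReal (∑ l ∈ Finset.range R, β*s^2*(2*(3/4)^l)) := by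
          rw [ENNReal.ofReal_sum_of_nonneg (fun l _ => by positivity)]
      _ ≤ ENNReal.ofReal (8*β*s^2) := by
          refine ENNReal.ofReal_le_ofReal ?_
          rw [← Finset.mul_sum]
          have := aux_geom R
          have hsge : ∑ l ∈ Finset.range R, ((3:ℝ)/4)^l ≥ 0 :=
            Finset.sum_nonneg fun l _ => by positivity
          have hβs : 0 ≤ β*s^2 := by positivity
          calc β*s^2*(∑ l ∈ Finset.range R, 2*((3:ℝ)/4)^l)
              = β*s^2*2*(∑ l ∈ Finset.range R, ((3:ℝ)/4)^l) := by
                rw [← Finset.mul_sum]; ring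
            _ ≤ β*s^2*2*4 := by nlinarith
            _ = 8*β*s^2 := by ring
  calc ∫⁻ x, ENNReal.ofReal (ZcF n i x) ∂P
      ≤ (∑ l ∈ Finset.range R, ENNReal.ofReal (((l:ℝ)+1)*s) * P (OBox l)) + P TBox := hint
    _ ≤ ENNReal.ofReal (8*β*s^2) + 0 := by rw [hTzero]; exact add_le_add hsum (le_refl _)
    _ = ENNReal.ofReal (8*β*(1/(α*((n:ℝ)-1)))^2) := by rw [add_zero]

/-- mgf-type bound for the own-bundle per-column variable -/
lemma ownExp_lintegral_le {n : ℕ} (hn : 3 ≤ n) (i : Fin n) :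
    ∫⁻ x, ENNReal.ofReal (Real.exp (ZcF n i x)) ∂(Measure.pi fun _ : Fin n => D)
      ≤ ENNReal.ofReal (Real.exp (16*β*(1/(α*((n:ℝ)-1)))^2)) := by
  set P : Measure (Fin n → ℝ) := Measure.pi fun _ : Fin n => D with hP
  set mb : ℝ := 8*β*(1/(α*((n:ℝ)-1)))^2 with hmb
  have hνpos : (0:ℝ) < (n:ℝ) - 1 := by
    have : (3:ℝ) ≤ (n:ℝ) := by exact_mod_cast hn
    linarith
  have hb' : (0:ℝ) < β := lt_of_lt_of_le one_pos hβ1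
  have hmb0 : 0 ≤ mb := by rw [hmb]; positivity
  have hpt : ∀ x, ENNReal.ofReal (Real.exp (ZcF n i x)) ≤ 1 + 2 * ENNReal.ofReal (ZcF n i x) := by
    intro x
    have h1 : Real.exp (ZcF n i x) ≤ 1 + 2 * (ZcF n i x) :=
      exp_le_one_add_two_mul (ZcF_nonneg n i x) (ZcF_le_one n i x)
    calc ENNReal.ofReal (Real.exp (ZcF n i x)) ≤ ENNReal.ofReal (1 + 2 * (ZcF n i x)) :=
        ENNReal.ofReal_le_ofReal h1
      _ = 1 + 2 * ENNReal.ofReal (ZcF n i x) := by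
        rw [ENNReal.ofReal_add zero_le_one (by nlinarith [ZcF_nonneg n i x])]
        rw [ENNReal.ofReal_mul (by norm_num : (0:ℝ) ≤ 2)]
        norm_num
  calc ∫⁻ x, ENNReal.ofReal (Real.exp (ZcF n i x)) ∂P
      ≤ ∫⁻ x, (1 + 2 * ENNReal.ofReal (ZcF n i x)) ∂P := lintegral_mono hpt
    _ = 1 + 2 * ∫⁻ x, ENNReal.ofReal (ZcF n i x) ∂P := by
        rw [lintegral_add_left measurable_const,
          lintegral_const_mul _ ((ZcF_measurable n i).ennreal_ofReal), lintegral_const,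
          measure_univ, mul_one]
    _ ≤ 1 + 2 * ENNReal.ofReal mb := by
        have := ownZ_lintegral_le hα hβ1 hab hαβ hf0 hDf hn i
        exact add_le_add (le_refl _) (mul_le_mul' (le_refl _) this)
    _ = ENNReal.ofReal (1 + 2*mb) := by
        rw [ENNReal.ofReal_add zero_le_one (by positivity), ENNReal.ofReal_mul
          (by norm_num : (0:ℝ) ≤ 2)]
        norm_num
    _ ≤ ENNReal.ofReal (Real.exp (16*β*(1/(α*((n:ℝ)-1)))^2)) := by
        refine ENNReal.ofReal_le_ofReal ?_
        have h2 : (2:ℝ)*mb + 1 ≤ Real.exp (2*mb) := Real.add_one_le_exp _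
        have h3 : (2:ℝ)*mb = 16*β*(1/(α*((n:ℝ)-1)))^2 := by rw [hmb]; ring
        rw [← h3]
        linarith

set_option maxHeartbeats 1000000 in
/-- mgf-type bound for the cross-bundle per-column indicator -/
lemma crossExp_lintegral_le {n : ℕ} (hn : 3 ≤ n) {i i' : Fin n} (hne : i ≠ i') :
    ∫⁻ x, ENNReal.ofReal (Real.exp (-(YcF n i i' (1/(2*β*(n:ℝ))) x)))
        ∂(Measure.pi fun _ : Fin n => D)
      ≤ ENNReal.ofReal (Real.exp (-(α^2/(8*β*(n:ℝ))/2))) := by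
  set P : Measure (Fin n → ℝ) := Measure.pi fun _ : Fin n => D with hP
  have hb' : (0:ℝ) < β := lt_of_lt_of_le one_pos hβ1
  have hn0 : (0:ℝ) < (n:ℝ) := by exact_mod_cast lt_of_lt_of_le (by norm_num) hn
  have hn3 : (3:ℝ) ≤ (n:ℝ) := by exact_mod_cast hn
  set st : ℝ := 1/(2*β*(n:ℝ)) with hst
  set q1 : ℝ := α^2/(8*β*(n:ℝ)) with hq1
  have hst0 : 0 < st := by rw [hst]; positivity
  have hsthalf : st ≤ 1/2 := by
    rw [hst, div_le_div_iff₀ (by positivity) (by norm_num)]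
    nlinarith
  have hq10 : 0 ≤ q1 := by rw [hq1]; positivity
  have hbst : β * st = 1/(2*(n:ℝ)) := by rw [hst]; field_simp
  have hhalf2 : β * st ≤ 1/2 := by
    rw [hbst, div_le_div_iff₀ (by positivity) (by norm_num)]
    nlinarith
  -- lower bound on the box probability
  have hq : ENNReal.ofReal q1 ≤ P (CBox n i i' st) := by
    rw [CBox, hP, Measure.pi_pi]
    simp only [apply_ite D]
    rw [prod_if_pair hne]
    have h1 : ENNReal.ofReal (α*st) ≤ D (Set.Iio st) :=
      D_Iio_ge (le_of_lt hα) hαβ hf0 hDf (le_of_lt hst0) (by linarith)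
    have h2 : ENNReal.ofReal (α*(1/2)) ≤ D (Set.Icc (1/2) 1) := by
      have h2a := D_ge_alpha_mul hαβ hf0 hDf (measurableSet_Icc (a := (1/2:ℝ)) (b := (1:ℝ)))
        (fun y hy => ⟨by linarith [hy.1], hy.2⟩)
      rw [Real.volume_Icc] at h2a
      calc ENNReal.ofReal (α*(1/2)) = ENNReal.ofReal α * ENNReal.ofReal (1 - 1/2) := by
            rw [← ENNReal.ofReal_mul (le_of_lt hα)]; norm_num
        _ ≤ D (Set.Icc (1/2) 1) := h2a
    have h3 : ENNReal.ofReal ((1 - 1/(2*(n:ℝ)))^(n-2)) ≤ D (Set.Ici st)^(n-2) := by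
      have h3a : ENNReal.ofReal (1 - 1/(2*(n:ℝ))) ≤ D (Set.Ici st) := by
        refine le_trans ?_ (D_Ici_ge (by linarith) hαβ hf0 hDf (le_of_lt hst0))
        rw [← hbst]
        refine ENNReal.le_sub_of_add_le_right ENNReal.ofReal_ne_top ?_
        rw [← ENNReal.ofReal_add (by linarith [hhalf2]) (by positivity)]
        simp
      calc ENNReal.ofReal ((1 - 1/(2*(n:ℝ)))^(n-2))
          = ENNReal.ofReal (1 - 1/(2*(n:ℝ)))^(n-2) := by
            have hhalf : 1/(2*(n:ℝ)) ≤ 1/2 := by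
              rw [div_le_div_iff₀ (by positivity) (by norm_num)]; nlinarith
            rw [ENNReal.ofReal_pow (by linarith)]
        _ ≤ D (Set.Ici st)^(n-2) := by gcongr
    have hpow : (1:ℝ)/2 ≤ (1 - 1/(2*(n:ℝ)))^(n-2) := by
      have hb2 : (-2:ℝ) ≤ -(1/(2*(n:ℝ))) := by
        rw [neg_le_neg_iff]
        rw [div_le_iff₀ (by positivity)]
        nlinarith
      have := one_add_mul_le_pow hb2 (n-2)
      have hcast : ((n-2:ℕ):ℝ) = (n:ℝ) - 2 := by
        rw [Nat.cast_sub (by omega)]; norm_num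
      rw [hcast] at this
      have h4 : 1 + ((n:ℝ)-2) * -(1/(2*(n:ℝ))) ≥ 1/2 := by
        have h6 : ((n:ℝ)-2) * (1/(2*(n:ℝ))) ≤ 1/2 := by
          rw [mul_one_div, div_le_div_iff₀ (by positivity) (by norm_num)]
          nlinarith
        nlinarith
      calc (1:ℝ)/2 ≤ 1 + ((n:ℝ)-2) * -(1/(2*(n:ℝ))) := h4
        _ ≤ (1 + -(1/(2*(n:ℝ))))^(n-2) := this
        _ = (1 - 1/(2*(n:ℝ)))^(n-2) := by ring_nf
    calc ENNReal.ofReal q1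
        ≤ ENNReal.ofReal ((α*st) * ((α*(1/2)) * ((1 - 1/(2*(n:ℝ)))^(n-2)))) := by
          refine ENNReal.ofReal_le_ofReal ?_
          have hq1eq : q1 = (α*st) * ((α*(1/2)) * (1/2)) := by
            rw [hq1, hst]; field_simp; ring
          rw [hq1eq]
          have hh : (0:ℝ) ≤ α*st := by positivity
          have hh2 : (0:ℝ) ≤ α*(1/2) := by positivity
          refine mul_le_mul_of_nonneg_left ?_ hh
          exact mul_le_mul_of_nonneg_left hpow hh2
      _ = ENNReal.ofReal (α*st) * (ENNReal.ofReal (α*(1/2)) *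
            ENNReal.ofReal ((1 - 1/(2*(n:ℝ)))^(n-2))) := by
          rw [ENNReal.ofReal_mul (show (0:ℝ) ≤ α*st by positivity),
            ENNReal.ofReal_mul (show (0:ℝ) ≤ α*(1/2) by positivity)]
      _ ≤ D (Set.Iio st) * (D (Set.Icc (1/2) 1) * D (Set.Ici st)^(n-2)) := by
          exact mul_le_mul' h1 (mul_le_mul' h2 h3)
  -- compute the integral
  set B : Set (Fin n → ℝ) := CBox n i i' st with hB
  have hBm : MeasurableSet B := CBox_measurable n i i' st
  have hfun : ∀ x, ENNReal.ofReal (Real.exp (-(YcF n i i' st x))) =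
      B.indicator (fun _ => ENNReal.ofReal (Real.exp (-1))) x +
      Bᶜ.indicator (fun _ => (1:ℝ≥0∞)) x := by
    intro x
    by_cases h : x ∈ B
    · rw [Set.indicator_of_mem h, Set.indicator_of_notMem (by simpa using h), add_zero,
        YcF, Set.indicator_of_mem h]
    · rw [Set.indicator_of_notMem h, Set.indicator_of_mem (by simpa using h), zero_add,
        YcF, Set.indicator_of_notMem h]
      simp
  have hint : ∫⁻ x, ENNReal.ofReal (Real.exp (-(YcF n i i' st x))) ∂P
      = ENNReal.ofReal (Real.exp (-1)) * P B + (1 - P B) := by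
    rw [lintegral_congr hfun, lintegral_add_left (measurable_const.indicator hBm),
      lintegral_indicator_const hBm, lintegral_indicator_const hBm.compl,
      one_mul, measure_compl hBm (measure_ne_top _ _), measure_univ]
  rw [hint]
  -- final bound
  set pr : ℝ := (P B).toReal with hpr
  have hPB1 : P B ≤ 1 := prob_le_one
  have hPBfin : P B ≠ ⊤ := measure_ne_top _ _
  have hPBeq : P B = ENNReal.ofReal pr := (ENNReal.ofReal_toReal hPBfin).symm
  have hpr0 : 0 ≤ pr := ENNReal.toReal_nonneg
  have hpr1 : pr ≤ 1 := by
    have := ENNReal.toReal_mono (by norm_num) hPB1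
    simpa using this
  have hprq : q1 ≤ pr := by
    rw [hPBeq] at hq
    exact (ENNReal.ofReal_le_ofReal_iff hpr0).mp hq
  have hone : (1:ℝ≥0∞) - P B = ENNReal.ofReal (1 - pr) := by
    rw [hPBeq]
    refine (ENNReal.eq_sub_of_add_eq ENNReal.ofReal_ne_top ?_).symm
    rw [← ENNReal.ofReal_add (by linarith) hpr0]
    norm_num
  rw [hone, hPBeq, ← ENNReal.ofReal_mul (Real.exp_nonneg _),
    ← ENNReal.ofReal_add (by positivity) (by linarith)]
  refine ENNReal.ofReal_le_ofReal ?_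
  have he1 : Real.exp (-1) ≤ 3/8 := exp_neg_one_le
  have he2 : 1 - q1/2 ≤ Real.exp (-(q1/2)) := by
    have := Real.add_one_le_exp (-(q1/2))
    linarith
  have he0 : 0 ≤ Real.exp (-1) := Real.exp_nonneg _
  calc Real.exp (-1) * pr + (1 - pr) ≤ (3/8) * pr + (1 - pr) := by nlinarith
    _ = 1 - (5/8)*pr := by ring
    _ ≤ 1 - q1/2 := by nlinarith
    _ ≤ Real.exp (-(α^2/(8*β*(n:ℝ))/2)) := by rw [← hq1]; exact he2


end Integrals

section Tail

variable {D : Measure ℝ} [IsProbabilityMeasure D]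

/-- generic Chernoff-type tail bound for sums over independent columns -/
lemma chernoff_tail (n mm : ℕ) (g : (Fin n → ℝ) → ℝ) (hg : Measurable g) (C T : ℝ)
    (hC : ∫⁻ x, ENNReal.ofReal (Real.exp (g x)) ∂(Measure.pi fun _ : Fin n => D)
      ≤ ENNReal.ofReal (Real.exp C)) :
    (Measure.pi fun _ : Fin n => Measure.pi fun _ : Fin mm => D)
      {d | T ≤ ∑ j, g (fun k => d k j)} ≤ ENNReal.ofReal (Real.exp ((mm:ℝ)*C - T)) := by
  set M : Measure (Fin n → Fin mm → ℝ) :=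
    Measure.pi fun _ : Fin n => Measure.pi fun _ : Fin mm => D with hM
  set P : Measure (Fin n → ℝ) := Measure.pi fun _ : Fin n => D with hP
  have hcol : ∀ (j : Fin mm), Measurable
      (fun d : Fin n → Fin mm → ℝ => fun k => d k j) := fun j =>
    measurable_pi_lambda _ fun k => (measurable_pi_apply j).comp (measurable_pi_apply k)
  set S : (Fin n → Fin mm → ℝ) → ℝ := fun d => ∑ j, g (fun k => d k j) with hS
  have hSm : Measurable S := Finset.measurable_sum _ (fun j _ => hg.comp (hcol j))
  set F : (Fin n → Fin mm → ℝ) → ℝ≥0∞ := fun d => ENNReal.ofReal (Real.exp (S d)) with hF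
  have hFm : Measurable F := (hSm.exp).ennreal_ofReal
  have hsub : {d | T ≤ S d} ⊆ {d | ENNReal.ofReal (Real.exp T) ≤ F d} := by
    intro d hd
    exact ENNReal.ofReal_le_ofReal (Real.exp_le_exp.mpr hd)
  have hmarkov := mul_meas_ge_le_lintegral₀ (μ := M) hFm.aemeasurable
    (ENNReal.ofReal (Real.exp T))
  have hfac : ∫⁻ d, F d ∂M ≤ ENNReal.ofReal (Real.exp ((mm:ℝ)*C)) := by
    have hptw : ∀ d, F d = ∏ j, (fun x => ENNReal.ofReal (Real.exp (g x))) (fun k => d k j) := by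
      intro d
      simp only [hF, hS]
      rw [Real.exp_sum, ENNReal.ofReal_prod_of_nonneg (fun j _ => Real.exp_nonneg _)]
    calc ∫⁻ d, F d ∂M
        = ∏ _j : Fin mm, ∫⁻ x, ENNReal.ofReal (Real.exp (g x)) ∂P := by
          rw [lintegral_congr hptw]
          exact lintegral_prod_columns n mm _ (fun j => hg.exp.ennreal_ofReal)
      _ ≤ ∏ _j : Fin mm, ENNReal.ofReal (Real.exp C) := Finset.prod_le_prod' fun j _ => hC
      _ = ENNReal.ofReal (Real.exp C) ^ mm := by
          rw [Finset.prod_const, Finset.card_univ, Fintype.card_fin]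
      _ = ENNReal.ofReal (Real.exp ((mm:ℝ)*C)) := by
          rw [← ENNReal.ofReal_pow (Real.exp_nonneg _), ← Real.exp_nat_mul]
  have hepos : (0:ℝ≥0∞) < ENNReal.ofReal (Real.exp T) := ENNReal.ofReal_pos.mpr (Real.exp_pos _)
  calc M {d | T ≤ S d}
      = (ENNReal.ofReal (Real.exp T))⁻¹ * ((ENNReal.ofReal (Real.exp T)) * M {d | T ≤ S d}) := by
        rw [← mul_assoc, ENNReal.inv_mul_cancel (ne_of_gt hepos) ENNReal.ofReal_ne_top, one_mul]
    _ ≤ (ENNReal.ofReal (Real.exp T))⁻¹ *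
        ((ENNReal.ofReal (Real.exp T)) * M {d | ENNReal.ofReal (Real.exp T) ≤ F d}) := by
        exact mul_le_mul' (le_refl _) (mul_le_mul' (le_refl _) (measure_mono hsub))
    _ ≤ (ENNReal.ofReal (Real.exp T))⁻¹ * ∫⁻ d, F d ∂M := mul_le_mul' (le_refl _) hmarkov
    _ ≤ (ENNReal.ofReal (Real.exp T))⁻¹ * ENNReal.ofReal (Real.exp ((mm:ℝ)*C)) :=
        mul_le_mul' (le_refl _) hfac
    _ = ENNReal.ofReal (Real.exp ((mm:ℝ)*C - T)) := by
        rw [← ENNReal.ofReal_inv_of_pos (Real.exp_pos _), ← Real.exp_neg,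
          ← ENNReal.ofReal_mul (Real.exp_nonneg _), ← Real.exp_add]
        congr 1
        ring

/-- marginal of a single entry -/
lemma marginal_entry (n mm : ℕ) (i : Fin n) (j : Fin mm) (S : Set ℝ) (hS : MeasurableSet S) :
    (Measure.pi fun _ : Fin n => Measure.pi fun _ : Fin mm => D) {d | d i j ∈ S} = D S := by
  classical
  have hset : {d : Fin n → Fin mm → ℝ | d i j ∈ S} =
      Set.univ.pi (fun k => if k = i then (Set.univ.pi fun l => if l = j then S else Set.univ)
        else Set.univ) := by
    ext d
    simp only [Set.mem_setOf_eq, Set.mem_pi, Set.mem_univ, forall_const, true_implies]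
    constructor
    · intro h k
      by_cases hk : k = i
      · subst hk
        rw [if_pos rfl, Set.mem_pi]
        intro l _
        by_cases hl : l = j
        · subst hl; rw [if_pos rfl]; exact h
        · rw [if_neg hl]; trivial
      · rw [if_neg hk]; trivial
    · intro h
      have hi := h i
      rw [if_pos rfl, Set.mem_pi] at hi
      have hij := hi j (Set.mem_univ _)
      rwa [if_pos rfl] at hij
  rw [hset, Measure.pi_pi]
  simp only [apply_ite (Measure.pi fun _ : Fin mm => D), measure_univ]
  rw [prod_if_single, one_pow, mul_one, Measure.pi_pi]
  simp only [apply_ite D, measure_univ]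
  rw [prod_if_single, one_pow, mul_one]

end Tail

set_option maxHeartbeats 2000000 in
/-- There is a constant `c > 0` (depending only on the distribution) such that, whenever
`m n ≥ c · n · log n`, the allocation assigning each chore to an agent with the smallest
disutility for it is envy-free with high probability. -/
theorem costMinimizing_envyFree_whp (α β : ℝ) (hα : 0 < α) (hαβ : α ≤ β)
    (D : Measure ℝ) [IsProbabilityMeasure D] (hD : PDFBounded01 D α β) :
    ∃ c : ℝ, 0 < c ∧ ∀ m : ℕ → ℕ, (∀ n : ℕ, c * (n : ℝ) * Real.log (n : ℝ) ≤ (m n : ℝ)) →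
      Tendsto
        (fun n => (Measure.pi fun _ : Fin n => Measure.pi fun _ : Fin (m n) => D)
          {d | ∀ A : Fin (m n) → Fin n, IsCostMinimizing d A → IsEnvyFree d A})
        atTop (nhds 1) := by
  classical
  obtain ⟨-, f, hf1, hf2, hf3⟩ := hD
  have hβ1 : (1:ℝ) ≤ β := by
    have h := D_le_beta_mul (D := D) hf1 hf2 hf3 MeasurableSet.univ
    rw [measure_univ, Set.univ_inter, Real.volume_Icc] at h
    have h2 : ENNReal.ofReal ((1:ℝ) - 0) = 1 := by norm_num
    rw [h2, mul_one] at h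
    exact ENNReal.one_le_ofReal.mp h
  have hb' : (0:ℝ) < β := lt_of_lt_of_le one_pos hβ1
  refine ⟨512*β/α^2, by positivity, ?_⟩
  intro m hm
  set N₀ : ℕ := max 3 ⌈(8192:ℝ)*β^2/α^4⌉₊ with hN₀
  have core : ∀ n : ℕ, N₀ ≤ n →
      1 - ENNReal.ofReal (2/(n:ℝ)) ≤
        (Measure.pi fun _ : Fin n => Measure.pi fun _ : Fin (m n) => D)
          {d | ∀ A : Fin (m n) → Fin n, IsCostMinimizing d A → IsEnvyFree d A} := by
    intro n hn
    have hn3 : 3 ≤ n := le_trans (le_max_left _ _) hn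
    have hn3R : (3:ℝ) ≤ (n:ℝ) := by exact_mod_cast hn3
    have hn0 : (0:ℝ) < (n:ℝ) := by linarith
    have hnB : (8192:ℝ)*β^2/α^4 ≤ (n:ℝ) := by
      have h1 : (⌈(8192:ℝ)*β^2/α^4⌉₊ : ℝ) ≤ (n:ℝ) := by
        exact_mod_cast le_trans (le_max_right _ _) hn
      exact le_trans (Nat.le_ceil _) h1
    set mm := m n with hmm
    set M : Measure (Fin n → Fin mm → ℝ) :=
      Measure.pi fun _ : Fin n => Measure.pi fun _ : Fin mm => D with hM
    set q1 : ℝ := α^2/(8*β*(n:ℝ)) with hq1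
    set st : ℝ := 1/(2*β*(n:ℝ)) with hst
    set T : ℝ := (mm:ℝ)*q1/8 with hT
    have hq1pos : 0 < q1 := by rw [hq1]; positivity
    have hsthalf : st ≤ 1/2 := by
      rw [hst, div_le_div_iff₀ (by positivity) (by norm_num)]
      nlinarith
    have hmlog : (512*β/α^2) * (n:ℝ) * Real.log n ≤ (mm:ℝ) := hm n
    have hlogpos : 0 ≤ Real.log n := Real.log_nonneg (by linarith)
    have hmm0 : (0:ℝ) ≤ (mm:ℝ) := Nat.cast_nonneg _
    have hkey : 4 * Real.log n ≤ (mm:ℝ)*q1/16 := by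
      have heq : (512*β/α^2) * (n:ℝ) * Real.log n * (α^2/(8*β*(n:ℝ))) / 16
          = 4 * Real.log n := by
        field_simp
        ring
      calc 4*Real.log n
          = (512*β/α^2)*(n:ℝ)*Real.log n * (α^2/(8*β*(n:ℝ)))/16 := heq.symm
        _ ≤ (mm:ℝ)*(α^2/(8*β*(n:ℝ)))/16 := by
            have hpos : (0:ℝ) < α^2/(8*β*(n:ℝ)) := by positivity
            gcongr
        _ = (mm:ℝ)*q1/16 := by rw [hq1]
    -- bad events
    set Bad0 : Set (Fin n → Fin mm → ℝ) :=
      ⋃ i, ⋃ j, {d : Fin n → Fin mm → ℝ | d i j ∈ (Set.Icc (0:ℝ) 1)ᶜ} with hBad0def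
    set BadOwn : Fin n → Set (Fin n → Fin mm → ℝ) := fun i =>
      {d | T ≤ ∑ j, ZcF n i (fun k => d k j)} with hBadOwndef
    set BadCross : Fin n → Fin n → Set (Fin n → Fin mm → ℝ) := fun i i' =>
      {d | ∑ j, YcF n i i' st (fun k => d k j) < 2*T} with hBadCrossdef
    set Bad := Bad0 ∪ ((⋃ i, BadOwn i) ∪ (⋃ i, ⋃ i', ⋃ (_ : i ≠ i'), BadCross i i'))
      with hBaddef
    -- complement of Bad is good
    have hgood : Badᶜ ⊆
        {d : Fin n → Fin mm → ℝ | ∀ A : Fin mm → Fin n,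
          IsCostMinimizing d A → IsEnvyFree d A} := by
      intro d hd A hA i i'
      rw [Set.mem_compl_iff, hBaddef] at hd
      have hd0 : ∀ i0 j0, d i0 j0 ∈ Set.Icc (0:ℝ) 1 := by
        intro i0 j0
        by_contra hc
        exact hd (Or.inl (Set.mem_iUnion.mpr ⟨i0, Set.mem_iUnion.mpr ⟨j0, hc⟩⟩))
      have hdo : ∑ j, ZcF n i (fun k => d k j) < T := by
        by_contra hc
        push_neg at hc
        exact hd (Or.inr (Or.inl (Set.mem_iUnion.mpr ⟨i, hc⟩)))
      by_cases hii : i = i'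
      · subst hii; exact le_refl _
      · have hdc : 2*T ≤ ∑ j, YcF n i i' st (fun k => d k j) := by
          by_contra hc
          push_neg at hc
          refine hd (Or.inr (Or.inr ?_))
          exact Set.mem_iUnion.mpr ⟨i, Set.mem_iUnion.mpr ⟨i',
            Set.mem_iUnion.mpr ⟨hii, hc⟩⟩⟩
        calc bundleCost d A i i ≤ ∑ j, ZcF n i (fun k => d k j) := own_le d hd0 A hA i
          _ ≤ T := le_of_lt hdo
          _ = (1/2)*(2*T) := by ring
          _ ≤ (1/2)*∑ j, YcF n i i' st (fun k => d k j) :=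
              mul_le_mul_of_nonneg_left hdc (by norm_num)
          _ ≤ bundleCost d A i i' := cross_ge d hd0 A hA i i' hii st hsthalf
    -- measure of Bad0
    have hDIcc : D ((Set.Icc (0:ℝ) 1)ᶜ) = 0 := by
      refine le_antisymm (le_trans (D_le_beta_mul hf1 hf2 hf3 measurableSet_Icc.compl) ?_)
        (zero_le)
      rw [Set.compl_inter_self]
      simp
    have hBad0 : M Bad0 = 0 := by
      refine le_antisymm (le_trans (measure_iUnion_le _) ?_) (zero_le)
      have hz1 : ∀ i0 : Fin n,
          M (⋃ j, {d : Fin n → Fin mm → ℝ | d i0 j ∈ (Set.Icc (0:ℝ) 1)ᶜ}) = 0 := by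
        intro i0
        refine le_antisymm (le_trans (measure_iUnion_le _) ?_) (zero_le)
        have hz2 : ∀ j0 : Fin mm,
            M {d : Fin n → Fin mm → ℝ | d i0 j0 ∈ (Set.Icc (0:ℝ) 1)ᶜ} = 0 := by
          intro j0
          rw [hM, marginal_entry n mm i0 j0 _ measurableSet_Icc.compl, hDIcc]
        exact le_of_eq (ENNReal.tsum_eq_zero.mpr hz2)
      exact le_of_eq (ENNReal.tsum_eq_zero.mpr hz1)
    have hexp4 : Real.exp (-(4*Real.log (n:ℝ))) = (((n:ℝ)^4)⁻¹) := by
      rw [Real.exp_neg]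
      congr 1
      rw [show (4:ℝ)*Real.log (n:ℝ) = ((4:ℕ):ℝ)*Real.log (n:ℝ) by norm_num,
        Real.exp_nat_mul, Real.exp_log hn0]
    -- own tail
    have hν : (0:ℝ) < (n:ℝ)-1 := by linarith
    have hOwn : ∀ i0 : Fin n, M (BadOwn i0) ≤ ENNReal.ofReal (((n:ℝ)^4)⁻¹) := by
      intro i0
      have hc := chernoff_tail (D := D) n mm (ZcF n i0) (ZcF_measurable n i0)
        (16*β*(1/(α*((n:ℝ)-1)))^2) T
        (ownExp_lintegral_le hα hβ1 hαβ hf1 hf2 hf3 hn3 i0)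
      rw [hBadOwndef]
      refine le_trans hc ?_
      rw [← hexp4]
      refine ENNReal.ofReal_le_ofReal (Real.exp_le_exp.mpr ?_)
      have hCb : 16*β*(1/(α*((n:ℝ)-1)))^2 ≤ q1/16 := by
        have h1 : ((n:ℝ)-1)^2 ≥ (n:ℝ)^2/4 := by nlinarith
        have h2 : 16*β*(1/(α*((n:ℝ)-1)))^2 = 16*β/(α*((n:ℝ)-1))^2 := by
          rw [one_div, inv_pow]
          ring
        rw [h2, show q1/16 = α^2/(128*β*(n:ℝ)) by rw [hq1]; field_simp; ring]
        rw [div_le_div_iff₀ (by positivity) (by positivity)]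
        have h3 : (2048:ℝ)*β^2*(n:ℝ) ≤ α^4*((n:ℝ)-1)^2 := by
          have h4 : (8192:ℝ)*β^2 ≤ α^4*(n:ℝ) := by
            rw [div_le_iff₀ (by positivity)] at hnB
            nlinarith
          nlinarith
        have h5 : (α*((n:ℝ)-1))^2 = α^2*((n:ℝ)-1)^2 := by ring
        rw [h5]
        -- goal : 16*β*(8*β*n*16) ≤ α^2 * (α^2*((n-1))^2)  (up to arrangement)
        nlinarith
      have hmC : (mm:ℝ)*(16*β*(1/(α*((n:ℝ)-1)))^2) ≤ (mm:ℝ)*q1/16 := by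
        calc (mm:ℝ)*(16*β*(1/(α*((n:ℝ)-1)))^2) ≤ (mm:ℝ)*(q1/16) :=
            mul_le_mul_of_nonneg_left hCb hmm0
          _ = (mm:ℝ)*q1/16 := by ring
      have hTval : T = (mm:ℝ)*q1/8 := hT
      linarith
    -- cross tail
    have hCross : ∀ i0 i0' : Fin n, i0 ≠ i0' →
        M (BadCross i0 i0') ≤ ENNReal.ofReal (((n:ℝ)^4)⁻¹) := by
      intro i0 i0' hne
      have hsubset : BadCross i0 i0' ⊆
          {d : Fin n → Fin mm → ℝ |
            -(2*T) ≤ ∑ j, (fun x => -(YcF n i0 i0' st x)) (fun k => d k j)} := by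
        intro d hd
        rw [hBadCrossdef] at hd
        simp only [Set.mem_setOf_eq] at hd ⊢
        rw [Finset.sum_neg_distrib]
        linarith
      have hc := chernoff_tail (D := D) n mm (fun x => -(YcF n i0 i0' st x))
        ((YcF_measurable n i0 i0' st).neg) (-(α^2/(8*β*(n:ℝ))/2)) (-(2*T))
        (crossExp_lintegral_le hα hβ1 hαβ hf1 hf2 hf3 hn3 hne)
      refine le_trans (measure_mono hsubset) (le_trans hc ?_)
      rw [← hexp4]
      refine ENNReal.ofReal_le_ofReal (Real.exp_le_exp.mpr ?_)
      rw [← hq1, hT]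
      have hmq : 0 ≤ (mm:ℝ)*q1 := by positivity
      linarith [hkey]
    -- assemble the union bound
    have hBadm : M Bad ≤ ENNReal.ofReal (2/(n:ℝ)) := by
      rw [hBaddef]
      refine le_trans (measure_union_le _ _) ?_
      rw [hBad0, zero_add]
      refine le_trans (measure_union_le _ _) ?_
      have h1 : M (⋃ i, BadOwn i) ≤ (n:ℝ≥0∞) * ENNReal.ofReal (((n:ℝ)^4)⁻¹) := by
        refine le_trans (measure_iUnion_le _) ?_
        rw [tsum_fintype]
        calc ∑ i0 : Fin n, M (BadOwn i0) ≤ ∑ _i0 : Fin n, ENNReal.ofReal (((n:ℝ)^4)⁻¹) :=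
            Finset.sum_le_sum fun i0 _ => hOwn i0
          _ = (n:ℝ≥0∞) * ENNReal.ofReal (((n:ℝ)^4)⁻¹) := by
              rw [Finset.sum_const, Finset.card_univ, Fintype.card_fin, nsmul_eq_mul]
      have h2 : M (⋃ i, ⋃ i', ⋃ (_ : i ≠ i'), BadCross i i') ≤
          (n:ℝ≥0∞) * ((n:ℝ≥0∞) * ENNReal.ofReal (((n:ℝ)^4)⁻¹)) := by
        refine le_trans (measure_iUnion_le _) ?_
        rw [tsum_fintype]
        have hin : ∀ i0 : Fin n, M (⋃ i', ⋃ (_ : i0 ≠ i'), BadCross i0 i') ≤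
            (n:ℝ≥0∞) * ENNReal.ofReal (((n:ℝ)^4)⁻¹) := by
          intro i0
          refine le_trans (measure_iUnion_le _) ?_
          rw [tsum_fintype]
          have hin2 : ∀ i0' : Fin n, M (⋃ (_ : i0 ≠ i0'), BadCross i0 i0') ≤
              ENNReal.ofReal (((n:ℝ)^4)⁻¹) := by
            intro i0'
            by_cases hne : i0 = i0'
            · have hempty : (⋃ (_ : i0 ≠ i0'), BadCross i0 i0') = ∅ :=
                Set.iUnion_eq_empty.mpr (fun h => absurd hne h)
              rw [hempty]
              simp
            · exact le_trans (measure_mono (Set.iUnion_subset fun _ => subset_rfl))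
                (hCross i0 i0' hne)
          calc ∑ i0' : Fin n, M (⋃ (_ : i0 ≠ i0'), BadCross i0 i0')
              ≤ ∑ _i0' : Fin n, ENNReal.ofReal (((n:ℝ)^4)⁻¹) :=
                Finset.sum_le_sum fun i0' _ => hin2 i0'
            _ = (n:ℝ≥0∞) * ENNReal.ofReal (((n:ℝ)^4)⁻¹) := by
                rw [Finset.sum_const, Finset.card_univ, Fintype.card_fin, nsmul_eq_mul]
        calc ∑ i0 : Fin n, M (⋃ i', ⋃ (_ : i0 ≠ i'), BadCross i0 i')
            ≤ ∑ _i0 : Fin n, (n:ℝ≥0∞) * ENNReal.ofReal (((n:ℝ)^4)⁻¹) :=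
              Finset.sum_le_sum fun i0 _ => hin i0
          _ = (n:ℝ≥0∞) * ((n:ℝ≥0∞) * ENNReal.ofReal (((n:ℝ)^4)⁻¹)) := by
              rw [Finset.sum_const, Finset.card_univ, Fintype.card_fin, nsmul_eq_mul]
      refine le_trans (add_le_add h1 h2) ?_
      have hcast : (n:ℝ≥0∞) = ENNReal.ofReal (n:ℝ) := by
        rw [ENNReal.ofReal_natCast]
      rw [hcast, ← ENNReal.ofReal_mul (by positivity), ← ENNReal.ofReal_mul (by positivity),
        ← ENNReal.ofReal_add (by positivity) (by positivity)]
      refine ENNReal.ofReal_le_ofReal ?_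
      have e1 : (n:ℝ)*((n:ℝ)^4)⁻¹ = ((n:ℝ)^3)⁻¹ := by
        field_simp
      have e2 : (n:ℝ)*((n:ℝ)^3)⁻¹ = ((n:ℝ)^2)⁻¹ := by
        field_simp
      rw [e1, e2]
      have e3 : ((n:ℝ)^3)⁻¹ ≤ (n:ℝ)⁻¹ := by
        rw [inv_le_inv₀ (by positivity) (by positivity)]
        nlinarith
      have e4 : ((n:ℝ)^2)⁻¹ ≤ (n:ℝ)⁻¹ := by
        rw [inv_le_inv₀ (by positivity) (by positivity)]
        nlinarith
      have e5 : 2/(n:ℝ) = (n:ℝ)⁻¹ + (n:ℝ)⁻¹ := by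
        rw [div_eq_mul_inv]
        ring
      rw [e5]
      exact add_le_add e3 e4
    -- conclude
    have huniv : (1:ℝ≥0∞) ≤
        M {d : Fin n → Fin mm → ℝ | ∀ A : Fin mm → Fin n,
          IsCostMinimizing d A → IsEnvyFree d A} + M Bad := by
      have h0 : (Set.univ : Set (Fin n → Fin mm → ℝ)) ⊆
          {d : Fin n → Fin mm → ℝ | ∀ A : Fin mm → Fin n,
            IsCostMinimizing d A → IsEnvyFree d A} ∪ Bad := by
        intro d _
        by_cases hb : d ∈ Bad
        · exact Or.inr hb
        · exact Or.inl (hgood hb)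
      calc (1:ℝ≥0∞) = M Set.univ := (measure_univ).symm
        _ ≤ M ({d : Fin n → Fin mm → ℝ | ∀ A : Fin mm → Fin n,
              IsCostMinimizing d A → IsEnvyFree d A} ∪ Bad) := measure_mono h0
        _ ≤ _ := measure_union_le _ _
    refine tsub_le_iff_right.mpr ?_
    exact le_trans huniv (add_le_add (le_refl _) hBadm)
  -- squeeze
  refine tendsto_of_tendsto_of_tendsto_of_le_of_le'
    (g := fun n : ℕ => 1 - ENNReal.ofReal (2/(n:ℝ))) (h := fun _ : ℕ => (1:ℝ≥0∞))
    ?_ tendsto_const_nhds ?_ ?_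
  · have h0 : Tendsto (fun n : ℕ => ENNReal.ofReal (2/(n:ℝ))) atTop (nhds 0) := by
      rw [show (0:ℝ≥0∞) = ENNReal.ofReal 0 by simp]
      exact ENNReal.tendsto_ofReal (tendsto_const_div_atTop_nhds_zero_nat 2)
    have h1 := ENNReal.Tendsto.sub (tendsto_const_nhds (x := (1:ℝ≥0∞))) h0
      (Or.inl ENNReal.one_ne_top)
    simpa using h1
  · filter_upwards [eventually_ge_atTop N₀] with n hn
    exact core n hn
  · exact Filter.Eventually.of_forall fun n => prob_le_one
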